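/- Let H be a finite-dimensional complex inner product space and let P_E and P_O be orthogonal projections on H with P_E + P_O = 1. Let K := ℂ² ⊗ ℂ² with standard basis vectors e_i ⊗ e_j, and for a, b ∈ ℂ with |a|² + |b|² = 1 and |a| ≠ |b| let ω := a (e₀ ⊗ e₀) + b (e₁ ⊗ e₁) ∈ K. Define P'_E := P_E ⊗ |e₀⊗e₀⟩⟨e₀⊗e₀| + P_O ⊗ |e₁⊗e₁⟩⟨e₁⊗e₁| on H ⊗ K. Then for all unit vectors ψ, φ ∈ H with ⟪ψ, φ⟫ = 0 and ⟪P_E ψ, P_E φ⟫ ≠ 0, the vectors ψ' := ψ ⊗ ω and φ' := φ ⊗ ω satisfy ⟪P'_E ψ', P'_E φ'⟫ = (|a|² − |b|²) ⟪P_E ψ, P_E φ⟫ ≠ 0. -/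

import Mathlib

open Matrix
open scoped ComplexOrder Kronecker

/-- The trace norm `‖Y‖₁ = Tr √(Yᴴ Y)` of a complex matrix. -/
noncomputable def traceNorm {m : Type*} [Fintype m] [DecidableEq m]
    (Y : Matrix m m ℂ) : ℝ :=
  ((((Matrix.posSemidef_conjTranspose_mul_self Y).isHermitian.eigenvectorUnitary : Matrix m m ℂ) *
      diagonal (((↑) : ℝ → ℂ) ∘ Real.sqrt ∘ (Matrix.posSemidef_conjTranspose_mul_self Y).isHermitian.eigenvalues) *
      (star (Matrix.posSemidef_conjTranspose_mul_self Y).isHermitian.eigenvectorUnitary : Matrix m m ℂ))).trace.re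

/-- The inner product `⟪x, y⟫ = ∑ i, conj (x i) * y i` on `m → ℂ`. -/
noncomputable def cinner {m : Type*} [Fintype m] (x y : m → ℂ) : ℂ := star x ⬝ᵥ y

/-- An orthogonal projection: a self-adjoint idempotent matrix. -/
def IsOrthoProj {m : Type*} [Fintype m] (P : Matrix m m ℂ) : Prop :=
  P.IsHermitian ∧ P * P = P

/-- An effect: an operator `S` with `0 ≤ S ≤ 1`. -/
def IsEffect {m : Type*} [Fintype m] [DecidableEq m] (S : Matrix m m ℂ) : Prop :=
  S.PosSemidef ∧ (1 - S).PosSemidef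

/-- The rank-one operator `|ψ⟩⟨ψ|`. -/
noncomputable def outer {m : Type*} (ψ : m → ℂ) : Matrix m m ℂ :=
  Matrix.vecMulVec ψ (star ψ)

/-- The standard basis vector `e_i ⊗ e_j` of `ℂ² ⊗ ℂ²`. -/
noncomputable def e2 (i j : Fin 2) : Fin 2 × Fin 2 → ℂ := fun p => if p = (i, j) then 1 else 0

/-- The tensor product `ψ ⊗ ω` of a vector of `H` with a vector of `K = ℂ² ⊗ ℂ²`. -/
noncomputable def tensorVec {m : Type*} (ψ : m → ℂ) (ω : Fin 2 × Fin 2 → ℂ) :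
    m × (Fin 2 × Fin 2) → ℂ := fun p => ψ p.1 * ω p.2

/- auxiliary lemmas -/

lemma kron_mulVec_tensor {m : Type*} [Fintype m] (M : Matrix m m ℂ)
    (N : Matrix (Fin 2 × Fin 2) (Fin 2 × Fin 2) ℂ) (ψ : m → ℂ) (ω : Fin 2 × Fin 2 → ℂ) :
    (M ⊗ₖ N).mulVec (tensorVec ψ ω) = tensorVec (M.mulVec ψ) (N.mulVec ω) := by
  funext p
  show (∑ q : m × (Fin 2 × Fin 2), (M ⊗ₖ N) p q * (ψ q.1 * ω q.2)) =
    (∑ j, M p.1 j * ψ j) * (∑ q, N p.2 q * ω q)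
  rw [Fintype.sum_prod_type, Finset.sum_mul_sum]
  exact Finset.sum_congr rfl fun i _ => Finset.sum_congr rfl fun j _ => by
    simp only [Matrix.kroneckerMap_apply]; ring

lemma star_e2 (i j : Fin 2) : star (e2 i j) = e2 i j := by
  funext q; simp only [Pi.star_apply, e2]; split <;> simp

lemma outer_e2_mulVec (i j : Fin 2) (v : Fin 2 × Fin 2 → ℂ) :
    (outer (e2 i j)).mulVec v = v (i, j) • e2 i j := by
  funext p
  simp only [outer, Matrix.mulVec, dotProduct, Matrix.vecMulVec_apply, star_e2,
    Pi.smul_apply, smul_eq_mul]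
  rw [Finset.sum_congr rfl (fun q (_ : q ∈ Finset.univ) =>
    show e2 i j p * e2 i j q * v q = if q = (i, j) then e2 i j p * v q else 0 by
      by_cases h : q = (i, j) <;> simp [e2, h])]
  simp [mul_comm]

lemma cinner_tensor {m : Type*} [Fintype m] (x y : m → ℂ) (u v : Fin 2 × Fin 2 → ℂ) :
    cinner (tensorVec x u) (tensorVec y v) = cinner x y * cinner u v := by
  show (∑ q : m × (Fin 2 × Fin 2), star (x q.1 * u q.2) * (y q.1 * v q.2)) =
    (∑ i, star (x i) * y i) * (∑ k, star (u k) * v k)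
  rw [Fintype.sum_prod_type, Finset.sum_mul_sum]
  exact Finset.sum_congr rfl fun i _ => Finset.sum_congr rfl fun j _ => by
    simp [star_mul']; ring

lemma cinner_add_left {m : Type*} [Fintype m] (x y z : m → ℂ) :
    cinner (x + y) z = cinner x z + cinner y z := by
  simp [cinner, add_dotProduct]

lemma cinner_add_right {m : Type*} [Fintype m] (x y z : m → ℂ) :
    cinner x (y + z) = cinner x y + cinner x z := by
  simp [cinner, dotProduct_add]

lemma cinner_smul_left {m : Type*} [Fintype m] (c : ℂ) (x y : m → ℂ) :
    cinner (c • x) y = star c * cinner x y := by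
  simp [cinner, smul_dotProduct]

lemma cinner_smul_right {m : Type*} [Fintype m] (c : ℂ) (x y : m → ℂ) :
    cinner x (c • y) = c * cinner x y := by
  simp [cinner, dotProduct_smul]

lemma cinner_e2 (i j k l : Fin 2) :
    cinner (e2 i j) (e2 k l) = if (i,j) = (k,l) then 1 else 0 := by
  simp only [cinner, dotProduct, e2, Pi.star_apply]
  fin_cases i <;> fin_cases j <;> fin_cases k <;> fin_cases l <;>
    simp [Fin.sum_univ_two, Fintype.sum_prod_type, Prod.ext_iff]

lemma cinner_proj {m : Type*} [Fintype m] [DecidableEq m] (P : Matrix m m ℂ)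
    (hP : IsOrthoProj P) (x y : m → ℂ) :
    cinner (P.mulVec x) (P.mulVec y) = cinner x (P.mulVec y) := by
  unfold cinner
  rw [Matrix.star_mulVec, ← Matrix.dotProduct_mulVec, Matrix.mulVec_mulVec,
    hP.1.eq, hP.2]

/-- **Theorem 2, necessity.** With a non-maximally entangled ancilla (`|a| ≠ |b|`), the
`E` parts of `ψ ⊗ ω` and `φ ⊗ ω` remain non-orthogonal whenever `⟪ψ_E, φ_E⟫ ≠ 0`. -/
theorem non_maximally_entangled_ancilla_fails
    {n : ℕ} (P_E P_O : Matrix (Fin n) (Fin n) ℂ)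
    (hPE : IsOrthoProj P_E) (hPO : IsOrthoProj P_O) (hsum : P_E + P_O = 1)
    (a b : ℂ) (hab : Complex.normSq a + Complex.normSq b = 1)
    (hne : ‖a‖ ≠ ‖b‖)
    (ω : Fin 2 × Fin 2 → ℂ) (hω : ω = a • e2 0 0 + b • e2 1 1)
    (P'E : Matrix (Fin n × (Fin 2 × Fin 2)) (Fin n × (Fin 2 × Fin 2)) ℂ)
    (hP'E : P'E = P_E ⊗ₖ outer (e2 0 0) + P_O ⊗ₖ outer (e2 1 1))
    (ψ φ : Fin n → ℂ) (hψ : cinner ψ ψ = 1) (hφ : cinner φ φ = 1)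
    (horth : cinner ψ φ = 0)
    (hEne : cinner (P_E.mulVec ψ) (P_E.mulVec φ) ≠ 0) :
    cinner (P'E.mulVec (tensorVec ψ ω)) (P'E.mulVec (tensorVec φ ω)) =
      ((Complex.normSq a - Complex.normSq b : ℝ) : ℂ) *
        cinner (P_E.mulVec ψ) (P_E.mulVec φ) ∧
    cinner (P'E.mulVec (tensorVec ψ ω)) (P'E.mulVec (tensorVec φ ω)) ≠ 0 := by
  have hω00 : ω (0, 0) = a := by simp [hω, e2]
  have hω11 : ω (1, 1) = b := by simp [hω, e2]
  have hmv : ∀ χ : Fin n → ℂ, P'E.mulVec (tensorVec χ ω) =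
      tensorVec (P_E.mulVec χ) (a • e2 0 0) + tensorVec (P_O.mulVec χ) (b • e2 1 1) := by
    intro χ
    rw [hP'E, Matrix.add_mulVec, kron_mulVec_tensor, kron_mulVec_tensor,
      outer_e2_mulVec, outer_e2_mulVec, hω00, hω11]
  have htens : ∀ (x : Fin n → ℂ) (c : ℂ) (u : Fin 2 × Fin 2 → ℂ),
      tensorVec x (c • u) = c • tensorVec x u := by
    intro x c u; funext p; simp [tensorVec]; ring
  -- orthogonality relation between E and O parts
  have hEO : cinner (P_O.mulVec ψ) (P_O.mulVec φ) =
      - cinner (P_E.mulVec ψ) (P_E.mulVec φ) := by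
    have h1 : cinner ψ (P_E.mulVec φ) + cinner ψ (P_O.mulVec φ) = 0 := by
      rw [← cinner_add_right]
      have : P_E.mulVec φ + P_O.mulVec φ = φ := by
        rw [← Matrix.add_mulVec, hsum, Matrix.one_mulVec]
      rw [this, horth]
    rw [cinner_proj P_O hPO, cinner_proj P_E hPE]
    linear_combination h1
  -- main computation
  have key : cinner (P'E.mulVec (tensorVec ψ ω)) (P'E.mulVec (tensorVec φ ω)) =
      ((Complex.normSq a - Complex.normSq b : ℝ) : ℂ) *
        cinner (P_E.mulVec ψ) (P_E.mulVec φ) := by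
    rw [hmv, hmv]
    simp only [htens, cinner_add_left, cinner_add_right, cinner_smul_left,
      cinner_smul_right, cinner_tensor, cinner_e2, Prod.mk.injEq]
    norm_num
    rw [hEO]
    have ha : (starRingEnd ℂ) a * a = (Complex.normSq a : ℂ) := by
      exact (Complex.normSq_eq_conj_mul_self).symm
    have hb : (starRingEnd ℂ) b * b = (Complex.normSq b : ℂ) := by
      exact (Complex.normSq_eq_conj_mul_self).symm
    push_cast
    linear_combination (cinner (P_E.mulVec ψ) (P_E.mulVec φ)) * ha -
      (cinner (P_E.mulVec ψ) (P_E.mulVec φ)) * hb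
  refine ⟨key, ?_⟩
  rw [key]
  apply mul_ne_zero _ hEne
  intro h
  apply hne
  have : Complex.normSq a = Complex.normSq b := by
    have := Complex.ofReal_eq_zero.mp h
    linarith
  rw [Complex.norm_def, Complex.norm_def, this]
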